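/- For fixed generator distribution p_g, the discriminator D maximizing E_{x∼p_data}[log D(x)] + E_{x∼p_g}[log(1 − D(x))] is D*(x) = p_data(x) / (p_data(x) + p_g(x)). -/

import Mathlib

open scoped BigOperators

open Classical in
/-- Probability of an event under a weight function on a finite sample space. -/
noncomputable def Pr {Ω : Type*} [Fintype Ω] (μ : Ω → ℝ) (P : Ω → Prop) : ℝ :=
  ∑ ω, if P ω then μ ω else 0

/-- `μ` is a probability mass function. -/
def IsPMF {Ω : Type*} [Fintype Ω] (μ : Ω → ℝ) : Prop :=
  (∀ ω, 0 ≤ μ ω) ∧ ∑ ω, μ ω = 1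

/-- Conditional independence of `S` and `T` given `U` (multiplicative form). -/
def CondIndep {Ω α β γ : Type*} [Fintype Ω] (μ : Ω → ℝ)
    (S : Ω → α) (T : Ω → β) (U : Ω → γ) : Prop :=
  ∀ (a : α) (b : β) (c : γ),
    Pr μ (fun ω => S ω = a ∧ T ω = b ∧ U ω = c) * Pr μ (fun ω => U ω = c) =
    Pr μ (fun ω => S ω = a ∧ U ω = c) * Pr μ (fun ω => T ω = b ∧ U ω = c)

/-- Independence of `S` and `T`. -/
def Indep {Ω α β : Type*} [Fintype Ω] (μ : Ω → ℝ) (S : Ω → α) (T : Ω → β) : Prop :=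
  ∀ (a : α) (b : β),
    Pr μ (fun ω => S ω = a ∧ T ω = b) =
    Pr μ (fun ω => S ω = a) * Pr μ (fun ω => T ω = b)

/-- For fixed generator distribution, the pointwise maximizer of
`a log t + b log (1 - t)` is `t = a / (a + b)`, and hence the discriminator
`D*(x) = p_data(x) / (p_data(x) + p_g(x))` maximizes the GAN objective. -/

private lemma key_pt (a b : ℝ) (ha : 0 < a) (hb : 0 < b) (t : ℝ)
    (ht0 : 0 < t) (ht1 : t < 1) :
    a * Real.log t + b * Real.log (1 - t) ≤
    a * Real.log (a / (a + b)) + b * Real.log (1 - a / (a + b)) := by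
  have hab : 0 < a + b := by linarith
  have h1t : 0 < 1 - t := by linarith
  have hba : 1 - a / (a + b) = b / (a + b) := by field_simp; ring
  rw [hba]
  have h1 : Real.log t - Real.log (a / (a + b)) = Real.log (t * (a + b) / a) := by
    rw [Real.log_div (by positivity) ha.ne', Real.log_mul ht0.ne' hab.ne',
        Real.log_div ha.ne' hab.ne']
    ring
  have h2 : Real.log (1 - t) - Real.log (b / (a + b)) = Real.log ((1 - t) * (a + b) / b) := by
    rw [Real.log_div (by positivity) hb.ne', Real.log_mul h1t.ne' hab.ne',
        Real.log_div hb.ne' hab.ne']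
    ring
  have l1 : Real.log (t * (a + b) / a) ≤ t * (a + b) / a - 1 :=
    Real.log_le_sub_one_of_pos (by positivity)
  have l2 : Real.log ((1 - t) * (a + b) / b) ≤ (1 - t) * (a + b) / b - 1 :=
    Real.log_le_sub_one_of_pos (by positivity)
  nlinarith [mul_le_mul_of_nonneg_left l1 ha.le, mul_le_mul_of_nonneg_left l2 hb.le,
    mul_div_cancel₀ (t * (a + b)) ha.ne', mul_div_cancel₀ ((1 - t) * (a + b)) hb.ne']

theorem stmt_11 {S : Type*} [Fintype S] (pdata pg : S → ℝ)
    (hd : IsPMF pdata) (hg : IsPMF pg) :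
    (∀ a b : ℝ, 0 < a → 0 < b → ∀ t ∈ Set.Ioo (0 : ℝ) 1,
      a * Real.log t + b * Real.log (1 - t) ≤
      a * Real.log (a / (a + b)) + b * Real.log (1 - a / (a + b))) ∧
    (∀ D : S → ℝ, (∀ x, 0 < D x ∧ D x < 1) →
      ∑ x, (pdata x * Real.log (D x) + pg x * Real.log (1 - D x)) ≤
      ∑ x, (pdata x * Real.log (pdata x / (pdata x + pg x)) +
            pg x * Real.log (1 - pdata x / (pdata x + pg x)))) := by
  constructor
  · intro a b ha hb t ht
    exact key_pt a b ha hb t ht.1 ht.2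
  · intro D hD
    apply Finset.sum_le_sum
    intro x _
    have hdx := hd.1 x
    have hgx := hg.1 x
    have h0 := (hD x).1
    have h1 := (hD x).2
    rcases hdx.lt_or_eq with ha | ha
    · rcases hgx.lt_or_eq with hb | hb
      · exact key_pt _ _ ha hb _ h0 h1
      · rw [← hb]
        simp only [add_zero, zero_mul]
        have : pdata x / pdata x = 1 := div_self ha.ne'
        rw [this]
        have := Real.log_nonpos h0.le h1.le
        simp
        nlinarith
    · rw [← ha]
      simp only [zero_mul, zero_add, zero_div, sub_zero, Real.log_one, zero_add]
      rcases hgx.lt_or_eq with hb | hb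
      · have h1t : 0 < 1 - D x := by linarith
        have := Real.log_nonpos h1t.le (by linarith)
        simp
        nlinarith
      · rw [← hb]; simp
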